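/- arXiv:0712.3288 — 3 statements merged into one kernel-verified Lean document; each statement's English description precedes it below -/
import Mathlib

section
/- For each r > 0, the convex hull of the set K_r := {(v, v⊗v − (r²/n)Iₙ) : v ∈ ℝⁿ, |v| = r} equals the sublevel set {(v,u) ∈ ℝⁿ × S₀ⁿ : e(v,u) ≤ r²/2}. -/
open Matrix RealInnerProductSpace

noncomputable def lambdaMax {n : ℕ} (w : Matrix (Fin n) (Fin n) ℝ) : ℝ :=
  if h : w.IsHermitian then ⨆ i, h.eigenvalues i else 0

noncomputable def eFun {n : ℕ} (v : EuclideanSpace ℝ (Fin n))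
    (u : Matrix (Fin n) (Fin n) ℝ) : ℝ :=
  (n / 2 : ℝ) * lambdaMax (vecMulVec (fun i => v i) (fun i => v i) - u)

variable {n : ℕ}

lemma vecMulVec_isHermitian (v : Fin n → ℝ) : (vecMulVec v v).IsHermitian := by
  ext i j
  simp [conjTranspose_apply, vecMulVec_apply, mul_comm]

lemma posSemidef_vecMulVec (v : Fin n → ℝ) : (vecMulVec v v).PosSemidef := by
  refine PosSemidef.of_dotProduct_mulVec_nonneg (vecMulVec_isHermitian v) fun x => ?_
  have h : star x ⬝ᵥ (vecMulVec v v *ᵥ x) = (v ⬝ᵥ x) * (v ⬝ᵥ x) := by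
    simp [dotProduct, mulVec, vecMulVec_apply, Finset.mul_sum, Finset.sum_mul, mul_assoc]
    rw [Finset.sum_comm]
    congr 1; ext i; congr 1; ext j; ring
  rw [h]
  exact mul_self_nonneg _

lemma posSemidef_smul {A : Matrix (Fin n) (Fin n) ℝ} (hA : A.PosSemidef) {c : ℝ} (hc : 0 ≤ c) :
    (c • A).PosSemidef := by
  refine PosSemidef.of_dotProduct_mulVec_nonneg ?_ fun x => ?_
  · unfold Matrix.IsHermitian
    rw [conjTranspose_smul, hA.1]
    simp
  · rw [smul_mulVec, dotProduct_smul, smul_eq_mul]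
    exact mul_nonneg hc (hA.dotProduct_mulVec_nonneg x)

lemma lambdaMax_le_iff (hn : 0 < n) {w : Matrix (Fin n) (Fin n) ℝ} (hw : w.IsHermitian)
    {a : ℝ} : lambdaMax w ≤ a ↔ (a • (1 : Matrix (Fin n) (Fin n) ℝ) - w).PosSemidef := by
  have : Nonempty (Fin n) := Fin.pos_iff_nonempty.mp hn
  rw [lambdaMax, dif_pos hw]
  constructor
  · intro h
    have hev : ∀ i, hw.eigenvalues i ≤ a := fun i =>
      le_trans (le_ciSup (Set.Finite.bddAbove (Set.finite_range _)) i) h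
    set U : Matrix (Fin n) (Fin n) ℝ := (hw.eigenvectorUnitary : Matrix (Fin n) (Fin n) ℝ) with hU
    have hUU : U * Uᴴ = 1 := by
      rw [← Matrix.star_eq_conjTranspose]
      exact Unitary.mul_star_self_of_mem hw.eigenvectorUnitary.2
    have key : a • (1 : Matrix (Fin n) (Fin n) ℝ) - w
        = U * diagonal (fun i => a - hw.eigenvalues i) * Uᴴ := by
      have hsp := hw.spectral_theorem
      have hd : diagonal (fun i => a - hw.eigenvalues i)
          = a • (1 : Matrix (Fin n) (Fin n) ℝ) - diagonal (RCLike.ofReal ∘ hw.eigenvalues) := by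
        rw [← diagonal_one, ← diagonal_smul, ← diagonal_sub]
        ext i j
        by_cases hij : i = j <;>
          simp [hij, Matrix.diagonal_apply, Matrix.one_apply, Matrix.smul_apply]
      rw [hd, Matrix.mul_sub, Matrix.sub_mul]
      rw [Matrix.mul_smul, Matrix.mul_one, Matrix.smul_mul, hUU]
      rw [← Matrix.star_eq_conjTranspose]
      nth_rw 1 [hsp]
      rw [Unitary.conjStarAlgAut_apply, ← hU]
    rw [key]
    exact PosSemidef.mul_mul_conjTranspose_same
      (PosSemidef.diagonal (fun i => sub_nonneg.mpr (hev i))) U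
  · intro h
    refine ciSup_le fun i => ?_
    set x : Fin n → ℝ := ⇑(hw.eigenvectorBasis i) with hx
    have hb := h.dotProduct_mulVec_nonneg x
    have hxx : star x ⬝ᵥ x = 1 := by
      have h1 : ‖hw.eigenvectorBasis i‖ = 1 := hw.eigenvectorBasis.orthonormal.1 i
      have h2 : star x ⬝ᵥ x =
          (inner ℝ (hw.eigenvectorBasis i) (hw.eigenvectorBasis i) : ℝ) := by
        rw [PiLp.inner_apply]
        simp [dotProduct, hx, sq]
      rw [h2, real_inner_self_eq_norm_sq, h1]
      norm_num
    have hmv : w *ᵥ x = hw.eigenvalues i • x := hw.mulVec_eigenvectorBasis i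
    rw [Matrix.sub_mulVec, Matrix.smul_mulVec, Matrix.one_mulVec, hmv,
      dotProduct_sub, dotProduct_smul, dotProduct_smul,
      smul_eq_mul, smul_eq_mul, hxx] at hb
    linarith

lemma isHermitian_sum_decomp {w : Matrix (Fin n) (Fin n) ℝ} (hw : w.IsHermitian) :
    w = ∑ i : Fin n, (hw.eigenvalues i •
      vecMulVec (fun j => hw.eigenvectorBasis i j) (fun j => hw.eigenvectorBasis i j)
      : Matrix (Fin n) (Fin n) ℝ) := by
  conv_lhs => rw [hw.spectral_theorem, Unitary.conjStarAlgAut_apply]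
  ext j k
  rw [Matrix.mul_apply]
  simp only [Matrix.sum_apply, Matrix.smul_apply, vecMulVec_apply, Matrix.mul_apply,
    diagonal_apply, Matrix.star_apply, star_trivial, Function.comp_apply,
    mul_ite, mul_zero, Finset.sum_ite_eq, Finset.sum_ite_eq', Finset.mem_univ, if_true, smul_eq_mul,
    Matrix.IsHermitian.eigenvectorUnitary_apply]
  refine Finset.sum_congr rfl fun i _ => ?_
  show (hw.eigenvectorBasis i j * RCLike.ofReal (hw.eigenvalues i)) * hw.eigenvectorBasis i k
      = hw.eigenvalues i * (hw.eigenvectorBasis i j * hw.eigenvectorBasis i k)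
  have : (RCLike.ofReal (hw.eigenvalues i) : ℝ) = hw.eigenvalues i := rfl
  rw [this]
  ring

/-- The set `K_r` of Euler states of speed `r`. -/
def eulerStates (n : ℕ) (r : ℝ) :
    Set (EuclideanSpace ℝ (Fin n) × Matrix (Fin n) (Fin n) ℝ) :=
  {p | ∃ v : EuclideanSpace ℝ (Fin n), ‖v‖ = r ∧
    p = (v, vecMulVec (fun i => v i) (fun i => v i)
            - (r ^ 2 / n) • (1 : Matrix (Fin n) (Fin n) ℝ))}

lemma key_induction (n : ℕ) (r : ℝ) (hr : 0 ≤ r) (t : Finset (Fin n))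
    (c : Fin n → ℝ) (w : Fin n → EuclideanSpace ℝ (Fin n)) (hwn : ∀ i, ‖w i‖ = 1) :
    ∀ (hc : ∀ i ∈ t, 0 ≤ c i) (v : EuclideanSpace ℝ (Fin n)),
    ‖v‖ ^ 2 + ∑ i ∈ t, c i = r ^ 2 →
    (v, vecMulVec (fun i => v i) (fun i => v i)
        + ∑ i ∈ t, c i • vecMulVec (fun j => w i j) (fun j => w i j)
        - (r ^ 2 / n) • (1 : Matrix (Fin n) (Fin n) ℝ)) ∈ convexHull ℝ (eulerStates n r) := by
  induction t using Finset.induction with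
  | empty =>
    intro _ v hv
    simp only [Finset.sum_empty, add_zero] at hv ⊢
    apply subset_convexHull
    refine ⟨v, ?_, rfl⟩
    rw [← Real.sqrt_sq (norm_nonneg v), hv, Real.sqrt_sq hr]
  | @insert i s his IH =>
    intro hc v hv
    have hci : 0 ≤ c i := hc i (Finset.mem_insert_self i s)
    have hcs : ∀ j ∈ s, 0 ≤ c j := fun j hj => hc j (Finset.mem_insert_of_mem hj)
    rw [Finset.sum_insert his] at hv ⊢
    rcases eq_or_lt_of_le hci with h0 | hpos
    · rw [← h0, zero_smul, zero_add]
      exact IH hcs v (by linarith)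
    · set α : ℝ := inner ℝ v (w i) with hα
      set d : ℝ := Real.sqrt (α ^ 2 + c i) with hdd
      have hd2 : d ^ 2 = α ^ 2 + c i := Real.sq_sqrt (by positivity)
      have hαd : |α| < d := by
        rw [← Real.sqrt_sq_eq_abs, hdd]
        exact Real.sqrt_lt_sqrt (sq_nonneg α) (by linarith)
      have hd : 0 < d := lt_of_le_of_lt (abs_nonneg α) hαd
      set s₁ : ℝ := d - α with hs₁
      set t₁ : ℝ := d + α with ht₁
      have hs₁pos : 0 < s₁ := by
        have := neg_abs_le α; have := le_abs_self α; simp only [hs₁]; linarith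
      have ht₁pos : 0 < t₁ := by
        have := neg_abs_le α; simp only [ht₁]; linarith
      have hst : s₁ * t₁ = c i := by simp only [hs₁, ht₁]; nlinarith
      have hsum : s₁ + t₁ = 2 * d := by simp only [hs₁, ht₁]; ring
      set vp : EuclideanSpace ℝ (Fin n) := v + s₁ • w i with hvp
      set vm : EuclideanSpace ℝ (Fin n) := v - t₁ • w i with hvm
      have hnp : ‖vp‖ ^ 2 = ‖v‖ ^ 2 + c i := by
        rw [hvp, norm_add_sq_real, real_inner_smul_right, norm_smul, ← hα, hwn i]
        simp only [Real.norm_eq_abs, mul_one]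
        rw [sq_abs]
        linear_combination (s₁ + d + α) * hs₁ + hd2
      have hnm : ‖vm‖ ^ 2 = ‖v‖ ^ 2 + c i := by
        rw [hvm, norm_sub_sq_real, real_inner_smul_right, norm_smul, ← hα, hwn i]
        simp only [Real.norm_eq_abs, mul_one]
        rw [sq_abs]
        linear_combination (t₁ + d - α) * ht₁ + hd2
      have hp := IH hcs vp (by rw [hnp]; linarith)
      have hm := IH hcs vm (by rw [hnm]; linarith)
      set μ : ℝ := t₁ / (2 * d) with hμ
      set ν : ℝ := s₁ / (2 * d) with hν
      have hμ0 : 0 ≤ μ := by positivity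
      have hν0 : 0 ≤ ν := by positivity
      have hμν : μ + ν = 1 := by
        rw [hμ, hν, ← add_div, ← hsum]
        field_simp
        ring
      have hcomb := (convex_convexHull ℝ (eulerStates n r)) hp hm hμ0 hν0 hμν
      have heq : μ • (vp, vecMulVec (fun j => vp j) (fun j => vp j)
            + ∑ k ∈ s, c k • vecMulVec (fun j => w k j) (fun j => w k j)
            - (r ^ 2 / n) • (1 : Matrix (Fin n) (Fin n) ℝ))
          + ν • (vm, vecMulVec (fun j => vm j) (fun j => vm j)
            + ∑ k ∈ s, c k • vecMulVec (fun j => w k j) (fun j => w k j)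
            - (r ^ 2 / n) • (1 : Matrix (Fin n) (Fin n) ℝ))
          = (v, vecMulVec (fun j => v j) (fun j => v j)
            + (c i • vecMulVec (fun j => w i j) (fun j => w i j)
              + ∑ k ∈ s, c k • vecMulVec (fun j => w k j) (fun j => w k j))
            - (r ^ 2 / n) • (1 : Matrix (Fin n) (Fin n) ℝ)) := by
        have h2d : (2 : ℝ) * d ≠ 0 := by positivity
        refine Prod.ext ?_ ?_
        · show μ • vp + ν • vm = v
          rw [hvp, hvm]
          have : μ • (v + s₁ • w i) + ν • (v - t₁ • w i)
              = (μ + ν) • v + (μ * s₁ - ν * t₁) • w i := by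
            simp only [smul_add, smul_sub, smul_smul, add_smul, sub_smul]
            abel
          rw [this, hμν, one_smul]
          have : μ * s₁ - ν * t₁ = 0 := by
            rw [hμ, hν]; field_simp; ring
          rw [this, zero_smul, add_zero]
        · show μ • (vecMulVec (fun j => vp j) (fun j => vp j) + _ - _)
            + ν • (vecMulVec (fun j => vm j) (fun j => vm j) + _ - _) = _
          have hkey : μ • vecMulVec (fun j => vp j) (fun j => vp j)
              + ν • vecMulVec (fun j => vm j) (fun j => vm j)
              = vecMulVec (fun j => v j) (fun j => v j)
                + c i • vecMulVec (fun j => w i j) (fun j => w i j) := by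
            ext j k
            simp only [Matrix.add_apply, Matrix.smul_apply, vecMulVec_apply, smul_eq_mul,
              hvp, hvm, PiLp.add_apply, PiLp.sub_apply, PiLp.smul_apply, smul_eq_mul]
            rw [hμ, hν, ← hst]
            have hsum' : 2 * d = s₁ + t₁ := hsum.symm
            rw [hsum']
            have hst₁ : s₁ + t₁ ≠ 0 := by positivity
            field_simp
            ring
          calc μ • (vecMulVec (fun j => vp j) (fun j => vp j)
                + ∑ k ∈ s, c k • vecMulVec (fun j => w k j) (fun j => w k j)
                - (r ^ 2 / n) • (1 : Matrix (Fin n) (Fin n) ℝ))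
              + ν • (vecMulVec (fun j => vm j) (fun j => vm j)
                + ∑ k ∈ s, c k • vecMulVec (fun j => w k j) (fun j => w k j)
                - (r ^ 2 / n) • (1 : Matrix (Fin n) (Fin n) ℝ))
              = (μ • vecMulVec (fun j => vp j) (fun j => vp j)
                  + ν • vecMulVec (fun j => vm j) (fun j => vm j))
                + (μ + ν) • (∑ k ∈ s, c k • vecMulVec (fun j => w k j) (fun j => w k j))
                - (μ + ν) • ((r ^ 2 / n) • (1 : Matrix (Fin n) (Fin n) ℝ)) := by
                simp only [smul_sub, smul_add, add_smul]; abel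
            _ = _ := by
                rw [hkey, hμν, one_smul, one_smul]
                abel
      rw [← heq]
      exact hcomb

lemma isSymm_isHermitian {A : Matrix (Fin n) (Fin n) ℝ} (h : A.IsSymm) : A.IsHermitian := by
  unfold Matrix.IsHermitian
  ext i j
  rw [conjTranspose_apply, star_trivial]
  exact congrFun (congrFun h j) i |>.symm ▸ (by rw [← h]; rfl)

lemma vecMulVec_isSymm (v : Fin n → ℝ) : (vecMulVec v v).IsSymm := by
  ext i j
  simp [Matrix.transpose_apply, vecMulVec_apply, mul_comm]

lemma trace_vecMulVec (v : Fin n → ℝ) : (vecMulVec v v).trace = ∑ i, v i * v i := by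
  simp [Matrix.trace, Matrix.diag, vecMulVec_apply]

lemma norm_sq_eq_sum (v : EuclideanSpace ℝ (Fin n)) : ‖v‖ ^ 2 = ∑ i, v i * v i := by
  rw [EuclideanSpace.norm_eq, Real.sq_sqrt (by positivity)]
  refine Finset.sum_congr rfl fun i _ => ?_
  rw [Real.norm_eq_abs, sq_abs, sq]

lemma eFun_le_iff (hn : 0 < n) {r : ℝ} {v : EuclideanSpace ℝ (Fin n)}
    {u : Matrix (Fin n) (Fin n) ℝ} (hu : u.IsSymm) :
    eFun v u ≤ r ^ 2 / 2 ↔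
    ((r ^ 2 / n) • (1 : Matrix (Fin n) (Fin n) ℝ)
      - (vecMulVec (fun i => v i) (fun i => v i) - u)).PosSemidef := by
  have hw : (vecMulVec (fun i => v i) (fun i => v i) - u).IsHermitian :=
    IsHermitian.sub (vecMulVec_isHermitian _) (isSymm_isHermitian hu)
  rw [eFun, ← lambdaMax_le_iff hn hw]
  have hN : (0 : ℝ) < n := by exact_mod_cast hn
  constructor
  · intro h
    rw [le_div_iff₀ hN]
    nlinarith
  · intro h
    rw [le_div_iff₀ hN] at h
    nlinarith

/-- the convex hull of `K_r` is the sublevel set `{e ≤ r²/2}`. -/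
theorem convexHull_eulerStates (n : ℕ) (hn : 2 ≤ n) (r : ℝ) (hr : 0 < r) :
    convexHull ℝ (eulerStates n r) =
      {p : EuclideanSpace ℝ (Fin n) × Matrix (Fin n) (Fin n) ℝ |
        p.2.IsSymm ∧ p.2.trace = 0 ∧ eFun p.1 p.2 ≤ r ^ 2 / 2} := by
  have hn0 : 0 < n := by omega
  have hN : (0 : ℝ) < n := by exact_mod_cast hn0
  apply Set.Subset.antisymm
  · -- convexHull ⊆ sublevel set
    apply convexHull_min
    · rintro p ⟨v, hv, rfl⟩
      refine ⟨?_, ?_, ?_⟩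
      · show (vecMulVec (fun i => v i) (fun i => v i)
            - (r ^ 2 / n) • (1 : Matrix (Fin n) (Fin n) ℝ)).IsSymm
        unfold Matrix.IsSymm
        rw [transpose_sub, transpose_smul, transpose_one, vecMulVec_isSymm]
      · show (vecMulVec (fun i => v i) (fun i => v i)
            - (r ^ 2 / n) • (1 : Matrix (Fin n) (Fin n) ℝ)).trace = 0
        rw [trace_sub, trace_smul, trace_one, trace_vecMulVec]
        have hsum : ∑ i, v i * v i = r ^ 2 := by
          rw [← norm_sq_eq_sum, hv]
        rw [hsum]
        simp only [smul_eq_mul, Fintype.card_fin]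
        field_simp
        ring
      · show eFun v _ ≤ r ^ 2 / 2
        rw [eFun]
        have heq : vecMulVec (fun i => v i) (fun i => v i)
            - (vecMulVec (fun i => v i) (fun i => v i)
              - (r ^ 2 / n) • (1 : Matrix (Fin n) (Fin n) ℝ))
            = (r ^ 2 / n) • (1 : Matrix (Fin n) (Fin n) ℝ) := sub_sub_cancel _ _
        rw [heq]
        have hherm : ((r ^ 2 / n) • (1 : Matrix (Fin n) (Fin n) ℝ)).IsHermitian := by
          unfold Matrix.IsHermitian
          rw [conjTranspose_smul, conjTranspose_one]
          simp
        have hle : lambdaMax ((r ^ 2 / n) • (1 : Matrix (Fin n) (Fin n) ℝ)) ≤ r ^ 2 / n := by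
          rw [lambdaMax_le_iff hn0 hherm, sub_self]
          exact Matrix.PosSemidef.zero
        have : (n / 2 : ℝ) * (r ^ 2 / n) = r ^ 2 / 2 := by field_simp
        nlinarith
    · -- convexity
      rintro p hp q hq a b ha hb hab
      obtain ⟨hps, hpt, hpe⟩ := hp
      obtain ⟨hqs, hqt, hqe⟩ := hq
      have hsnd : (a • p + b • q).2 = a • p.2 + b • q.2 := rfl
      have hfst : (a • p + b • q).1 = a • p.1 + b • q.1 := rfl
      have hsymm : (a • p.2 + b • q.2).IsSymm := by
        unfold Matrix.IsSymm
        rw [transpose_add, transpose_smul, transpose_smul, hps, hqs]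
      refine ⟨by rw [hsnd]; exact hsymm, ?_, ?_⟩
      · rw [hsnd, trace_add, trace_smul, trace_smul, hpt, hqt]
        simp
      · rw [hsnd, hfst, eFun_le_iff hn0 hsymm]
        rw [eFun_le_iff hn0 hps] at hpe
        rw [eFun_le_iff hn0 hqs] at hqe
        have hb' : b = 1 - a := by linarith
        subst hb'
        have hkey : (r ^ 2 / n) • (1 : Matrix (Fin n) (Fin n) ℝ)
            - (vecMulVec (fun i => (a • p.1 + (1 - a) • q.1) i)
                (fun i => (a • p.1 + (1 - a) • q.1) i) - (a • p.2 + (1 - a) • q.2))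
            = a • ((r ^ 2 / n) • (1 : Matrix (Fin n) (Fin n) ℝ)
                - (vecMulVec (fun i => p.1 i) (fun i => p.1 i) - p.2))
              + (1 - a) • ((r ^ 2 / n) • (1 : Matrix (Fin n) (Fin n) ℝ)
                - (vecMulVec (fun i => q.1 i) (fun i => q.1 i) - q.2))
              + (a * (1 - a)) • vecMulVec (fun i => p.1 i - q.1 i)
                  (fun i => p.1 i - q.1 i) := by
          ext j k
          simp only [Matrix.add_apply, Matrix.sub_apply, Matrix.smul_apply, vecMulVec_apply,
            PiLp.add_apply, PiLp.smul_apply, smul_eq_mul, Matrix.one_apply]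
          ring
        rw [hkey]
        exact ((posSemidef_smul hpe ha).add (posSemidef_smul hqe hb)).add
          (posSemidef_smul (posSemidef_vecMulVec _) (by nlinarith))
  · -- sublevel set ⊆ convexHull
    rintro ⟨v, u⟩ ⟨hus, hut, hue⟩
    simp only [Set.mem_setOf_eq] at hus hut hue
    have hC : ((r ^ 2 / n) • (1 : Matrix (Fin n) (Fin n) ℝ)
        - (vecMulVec (fun i => v i) (fun i => v i) - u)).PosSemidef :=
      (eFun_le_iff hn0 hus).mp hue
    set C := (r ^ 2 / n) • (1 : Matrix (Fin n) (Fin n) ℝ)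
        - (vecMulVec (fun i => v i) (fun i => v i) - u) with hCdef
    have hCh : C.IsHermitian := hC.1
    have hdecomp := isHermitian_sum_decomp hCh
    set μ : Fin n → ℝ := hCh.eigenvalues with hμdef
    set b : Fin n → EuclideanSpace ℝ (Fin n) := fun i => hCh.eigenvectorBasis i with hbdef
    have hbn : ∀ i, ‖b i‖ = 1 := fun i => hCh.eigenvectorBasis.orthonormal.1 i
    have hμ0 : ∀ i ∈ Finset.univ, 0 ≤ μ i := fun i _ => hC.eigenvalues_nonneg i
    have htrC : C.trace = r ^ 2 - ‖v‖ ^ 2 := by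
      rw [hCdef, trace_sub, trace_sub, trace_smul, trace_one, _root_.trace_vecMulVec, hut,
        ← norm_sq_eq_sum]
      simp only [smul_eq_mul, Fintype.card_fin]
      field_simp
      ring
    have htrC' : C.trace = ∑ i, μ i := by
      rw [hdecomp]
      rw [trace_sum]
      refine Finset.sum_congr rfl fun i _ => ?_
      rw [trace_smul, _root_.trace_vecMulVec]
      have : ∑ j, hCh.eigenvectorBasis i j * hCh.eigenvectorBasis i j = 1 := by
        rw [← norm_sq_eq_sum, hbn i]
        norm_num
      rw [this]
      simp
    have hinv : ‖v‖ ^ 2 + ∑ i ∈ Finset.univ, μ i = r ^ 2 := by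
      rw [← htrC', htrC]; ring
    have hmem := key_induction n r hr.le Finset.univ μ b hbn hμ0 v hinv
    have hfinal : vecMulVec (fun i => v i) (fun i => v i)
        + ∑ i ∈ Finset.univ, μ i • vecMulVec (fun j => b i j) (fun j => b i j)
        - (r ^ 2 / n) • (1 : Matrix (Fin n) (Fin n) ℝ) = u := by
      have : ∑ i ∈ Finset.univ, μ i • vecMulVec (fun j => b i j) (fun j => b i j) = C := by
        rw [hdecomp]
      rw [this, hCdef]
      abel
    rwa [hfinal] at hmem
end

section
/- For (v,u) ∈ ℝⁿ × S₀ⁿ with e(v,u) > 0, the number √(2·e(v,u)) is the smallest ρ > 0 such that (v,u) belongs to the convex hull of K_ρ := {(w, w⊗w − (ρ²/n)Iₙ) : |w| = ρ}. -/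
open Matrix

section CompactHull
open Set Finset

theorem myIsCompact_convexHull {E : Type*} [AddCommGroup E] [Module ℝ E] [TopologicalSpace E]
    [IsTopologicalAddGroup E] [ContinuousSMul ℝ E] [FiniteDimensional ℝ E]
    {s : Set E} (hs : IsCompact s) : IsCompact (convexHull ℝ s) := by
  classical
  rcases s.eq_empty_or_nonempty with rfl | ⟨y₀, hy₀⟩
  · simp
  set d : ℕ := Module.finrank ℝ E + 1 with hd
  set φ : (Fin d → ℝ) × (Fin d → E) → E := fun p => ∑ i, p.1 i • p.2 i with hφ
  have hcont : Continuous φ := continuous_finset_sum _ fun i _ =>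
    ((continuous_apply i).comp continuous_fst).smul ((continuous_apply i).comp continuous_snd)
  have hT : IsCompact ((stdSimplex ℝ (Fin d)) ×ˢ (Set.univ.pi fun _ : Fin d => s)) :=
    (isCompact_stdSimplex ℝ _).prod (isCompact_univ_pi fun _ => hs)
  have himg : convexHull ℝ s
      = φ '' ((stdSimplex ℝ (Fin d)) ×ˢ (Set.univ.pi fun _ : Fin d => s)) := by
    apply Set.Subset.antisymm
    · intro x hx
      obtain ⟨ι, hι, z, w, hzs, hai, hw0, hw1, hwz⟩ := eq_pos_convex_span_of_mem_convexHull hx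
      have hcard : Fintype.card ι ≤ d := by
        calc Fintype.card ι ≤ Module.finrank ℝ (vectorSpan ℝ (Set.range z)) + 1 :=
              hai.card_le_finrank_succ
        _ ≤ d := by
              have := Submodule.finrank_le (vectorSpan ℝ (Set.range z))
              omega
      set c : ℕ := Fintype.card ι with hc
      set g : ι ≃ Fin c := Fintype.equivFin ι with hg
      set fW : ℕ → ℝ := fun j => if h : j < c then w (g.symm ⟨j, h⟩) else 0 with hfW
      set fF : ℕ → E := fun j => if h : j < c then z (g.symm ⟨j, h⟩) else y₀ with hfF
      refine ⟨(fun j : Fin d => fW j, fun j : Fin d => fF j), ⟨⟨?_, ?_⟩, ?_⟩, ?_⟩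
      · intro j
        simp only [hfW]
        split
        · exact (hw0 _).le
        · exact le_refl _
      · have h1 : ∑ j : Fin d, fW (j : ℕ) = ∑ j ∈ range d, fW j :=
          Fin.sum_univ_eq_sum_range fW d
        have h2 : ∑ j ∈ range d, fW j = ∑ j ∈ range c, fW j := by
          refine (Finset.sum_subset (Finset.range_subset_range.mpr hcard) ?_).symm
          intro j _ hj
          simp only [hfW]
          rw [dif_neg (Finset.mem_range.not.mp hj)]
        have h3 : ∑ j ∈ range c, fW j = ∑ j : Fin c, fW (j : ℕ) :=
          (Fin.sum_univ_eq_sum_range fW c).symm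
        have h4 : ∑ j : Fin c, fW (j : ℕ) = ∑ i : ι, w i := by
          rw [← Equiv.sum_comp g.symm w]
          refine Finset.sum_congr rfl fun j _ => ?_
          simp only [hfW]
          rw [dif_pos j.2]
        rw [h1, h2, h3, h4, hw1]
      · intro j _
        simp only [hfF]
        split
        · exact hzs ⟨_, rfl⟩
        · exact hy₀
      · set fS : ℕ → E := fun j => if h : j < c then w (g.symm ⟨j, h⟩) • z (g.symm ⟨j, h⟩) else 0
          with hfS
        have h0 : φ (fun j : Fin d => fW j, fun j : Fin d => fF j) = ∑ j : Fin d, fS (j : ℕ) := by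
          refine Finset.sum_congr rfl fun j _ => ?_
          simp only [hfW, hfF, hfS]
          split
          · rfl
          · simp
        have h1 : ∑ j : Fin d, fS (j : ℕ) = ∑ j ∈ range d, fS j :=
          Fin.sum_univ_eq_sum_range fS d
        have h2 : ∑ j ∈ range d, fS j = ∑ j ∈ range c, fS j := by
          refine (Finset.sum_subset (Finset.range_subset_range.mpr hcard) ?_).symm
          intro j _ hj
          simp only [hfS]
          rw [dif_neg (Finset.mem_range.not.mp hj)]
        have h3 : ∑ j ∈ range c, fS j = ∑ j : Fin c, fS (j : ℕ) :=
          (Fin.sum_univ_eq_sum_range fS c).symm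
        have h4 : ∑ j : Fin c, fS (j : ℕ) = ∑ i : ι, w i • z i := by
          rw [← Equiv.sum_comp g.symm (fun i => w i • z i)]
          refine Finset.sum_congr rfl fun j _ => ?_
          simp only [hfS]
          rw [dif_pos j.2]
        rw [h0, h1, h2, h3, h4, hwz]
    · rintro x ⟨⟨W, F⟩, ⟨⟨hW0, hW1⟩, hF⟩, rfl⟩
      exact (convex_convexHull ℝ s).sum_mem (fun i _ => hW0 i) hW1
        (fun i _ => subset_convexHull ℝ s (hF i (Set.mem_univ i)))
  rw [himg]
  exact hT.image hcont

end CompactHull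

/- ### Spectral facts -/

section Spectral

variable {n : ℕ}

theorem lambdaMax_spec [NeZero n] {A : Matrix (Fin n) (Fin n) ℝ} (hA : A.IsHermitian) :
    ∃ i, lambdaMax A = hA.eigenvalues i ∧ ∀ j, hA.eigenvalues j ≤ hA.eigenvalues i := by
  obtain ⟨i, hi⟩ := Finite.exists_max hA.eigenvalues
  refine ⟨i, ?_, hi⟩
  rw [lambdaMax, dif_pos hA]
  exact le_antisymm (ciSup_le hi) (le_ciSup (Set.Finite.bddAbove (Set.finite_range _)) i)

theorem key_conj {A : Matrix (Fin n) (Fin n) ℝ} (hA : A.IsHermitian)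
    (x : Fin n → ℝ) (D : Matrix (Fin n) (Fin n) ℝ) :
    x ⬝ᵥ (((hA.eigenvectorUnitary : Matrix (Fin n) (Fin n) ℝ) * D
        * star (hA.eigenvectorUnitary : Matrix (Fin n) (Fin n) ℝ)) *ᵥ x)
      = (star (hA.eigenvectorUnitary : Matrix (Fin n) (Fin n) ℝ) *ᵥ x) ⬝ᵥ
        (D *ᵥ (star (hA.eigenvectorUnitary : Matrix (Fin n) (Fin n) ℝ) *ᵥ x)) := by
  set U := (hA.eigenvectorUnitary : Matrix (Fin n) (Fin n) ℝ)
  rw [← mulVec_mulVec, ← mulVec_mulVec, dotProduct_mulVec]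
  congr 1
  rw [star_eq_conjTranspose, conjTranspose_eq_transpose_of_trivial, mulVec_transpose]

theorem rayleigh_le [NeZero n] {A : Matrix (Fin n) (Fin n) ℝ} (hA : A.IsHermitian)
    (x : Fin n → ℝ) : x ⬝ᵥ (A *ᵥ x) ≤ lambdaMax A * (x ⬝ᵥ x) := by
  obtain ⟨i₀, hmax, hle⟩ := lambdaMax_spec hA
  set U := (hA.eigenvectorUnitary : Matrix (Fin n) (Fin n) ℝ) with hU
  set y := star U *ᵥ x with hy
  have hyy : y ⬝ᵥ y = x ⬝ᵥ x := by
    have h1 : U * 1 * star U = 1 := by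
      rw [mul_one]
      exact Matrix.mem_unitaryGroup_iff.mp hA.eigenvectorUnitary.2
    have := key_conj hA x 1
    rw [h1, one_mulVec, one_mulVec] at this
    exact this.symm
  have hspec : x ⬝ᵥ (A *ᵥ x) = ∑ i, hA.eigenvalues i * y i ^ 2 := by
    conv_lhs => rw [hA.spectral_theorem]
    rw [Unitary.conjStarAlgAut_apply, key_conj hA x]
    simp only [dotProduct, mulVec_diagonal, Function.comp_apply, RCLike.ofReal_real_eq_id, id]
    exact Finset.sum_congr rfl fun i _ => by ring
  rw [hspec, ← hyy]
  have : y ⬝ᵥ y = ∑ i, y i ^ 2 := Finset.sum_congr rfl fun i _ => by ring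
  rw [this, Finset.mul_sum]
  exact Finset.sum_le_sum fun i _ =>
    mul_le_mul_of_nonneg_right (hmax ▸ hle i) (sq_nonneg _)

theorem exists_rayleigh_eq [NeZero n] {A : Matrix (Fin n) (Fin n) ℝ} (hA : A.IsHermitian) :
    ∃ z : Fin n → ℝ, z ⬝ᵥ z = 1 ∧ A *ᵥ z = lambdaMax A • z := by
  obtain ⟨i₀, hmax, _⟩ := lambdaMax_spec hA
  refine ⟨⇑(hA.eigenvectorBasis i₀), ?_, ?_⟩
  · have h1 : ‖hA.eigenvectorBasis i₀‖ = 1 := hA.eigenvectorBasis.orthonormal.1 i₀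
    have h2 : ‖hA.eigenvectorBasis i₀‖ = Real.sqrt (∑ i, ‖hA.eigenvectorBasis i₀ i‖ ^ 2) :=
      EuclideanSpace.norm_eq _
    have h3 : ∑ i, ‖hA.eigenvectorBasis i₀ i‖ ^ 2 = 1 := by
      have h4 : (0:ℝ) ≤ ∑ i, ‖hA.eigenvectorBasis i₀ i‖ ^ 2 :=
        Finset.sum_nonneg fun i _ => sq_nonneg _
      nlinarith [Real.sq_sqrt h4]
    calc (⇑(hA.eigenvectorBasis i₀) : Fin n → ℝ) ⬝ᵥ ⇑(hA.eigenvectorBasis i₀)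
        = ∑ i, ‖hA.eigenvectorBasis i₀ i‖ ^ 2 := by
          refine Finset.sum_congr rfl fun i _ => ?_
          rw [Real.norm_eq_abs, sq_abs, sq]
    _ = 1 := h3
  · rw [hmax]
    exact hA.mulVec_eigenvectorBasis i₀

end Spectral

/- ### Matrix helper lemmas -/

section Helpers

variable {n : ℕ}

theorem vecMulVec_self_transpose (w : Fin n → ℝ) : (vecMulVec w w)ᵀ = vecMulVec w w := by
  ext i j
  simp [vecMulVec_apply, mul_comm]

theorem trace_vecMulVec' (w y : Fin n → ℝ) : (vecMulVec w y).trace = w ⬝ᵥ y := by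
  simp [Matrix.trace, Matrix.diag, vecMulVec_apply, dotProduct]

theorem dot_vecMulVec (w x : Fin n → ℝ) : x ⬝ᵥ (vecMulVec w w *ᵥ x) = (w ⬝ᵥ x) ^ 2 := by
  have h : vecMulVec w w *ᵥ x = (w ⬝ᵥ x) • w := by
    ext i
    simp only [mulVec, vecMulVec_apply, dotProduct, Pi.smul_apply, smul_eq_mul, Finset.mul_sum,
      Finset.sum_mul]
    exact Finset.sum_congr rfl fun j _ => by ring
  rw [h, dotProduct_smul, smul_eq_mul, dotProduct_comm, sq]

theorem isHermitian_of_symm {A : Matrix (Fin n) (Fin n) ℝ} (h : Aᵀ = A) : A.IsHermitian := by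
  rw [Matrix.IsHermitian, conjTranspose_eq_transpose_of_trivial]
  exact h

theorem dot_mulVec_single (M : Matrix (Fin n) (Fin n) ℝ) (i j : Fin n) :
    Pi.single i (1:ℝ) ⬝ᵥ (M *ᵥ Pi.single j 1) = M i j := by
  simp [dotProduct, mulVec, Pi.single_apply]

theorem dotProduct_mulVec_symm {M : Matrix (Fin n) (Fin n) ℝ} (hM : Mᵀ = M) (x y : Fin n → ℝ) :
    x ⬝ᵥ (M *ᵥ y) = y ⬝ᵥ (M *ᵥ x) := by
  rw [dotProduct_mulVec, ← mulVec_transpose, hM]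
  exact dotProduct_comm _ _

theorem quad_smul_one (r : ℝ) (A : Matrix (Fin n) (Fin n) ℝ) (x : Fin n → ℝ) :
    x ⬝ᵥ ((r • (1 : Matrix (Fin n) (Fin n) ℝ) - A) *ᵥ x)
      = r * (x ⬝ᵥ x) - x ⬝ᵥ (A *ᵥ x) := by
  rw [sub_mulVec, dotProduct_sub, smul_mulVec, one_mulVec, dotProduct_smul, smul_eq_mul]

end Helpers

/- ### The convex set S -/

section SsetSection

variable {n : ℕ}

/-- Ambient state space. -/
abbrev EV (n : ℕ) := EuclideanSpace ℝ (Fin n) × Matrix (Fin n) (Fin n) ℝ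

def matA {n : ℕ} (p : EV n) : Matrix (Fin n) (Fin n) ℝ :=
  vecMulVec (fun i => p.1 i) (fun i => p.1 i) - p.2

def Sset (n : ℕ) (r : ℝ) : Set (EV n) :=
  {p | p.2.IsSymm ∧ p.2.trace = 0 ∧
    ∀ x : Fin n → ℝ, x ⬝ᵥ (matA p *ᵥ x) ≤ r ^ 2 / n * (x ⬝ᵥ x)}

theorem quad_matA (p : EV n) (x : Fin n → ℝ) :
    x ⬝ᵥ (matA p *ᵥ x) = ((fun i => p.1 i) ⬝ᵥ x) ^ 2 - x ⬝ᵥ (p.2 *ᵥ x) := by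
  rw [matA, sub_mulVec, dotProduct_sub, dot_vecMulVec]

theorem Sset_convex (n : ℕ) (r : ℝ) : Convex ℝ (Sset n r) := by
  rintro p ⟨hps, hpt, hpq⟩ q ⟨hqs, hqt, hqq⟩ a b ha hb hab
  refine ⟨?_, ?_, ?_⟩
  · show (a • p.2 + b • q.2)ᵀ = a • p.2 + b • q.2
    rw [transpose_add, transpose_smul, transpose_smul, hps, hqs]
  · show (a • p.2 + b • q.2).trace = 0
    rw [trace_add, trace_smul, trace_smul, hpt, hqt]
    simp
  · intro x
    have h1 := hpq x
    have h2 := hqq x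
    rw [quad_matA] at h1 h2 ⊢
    have hv : ((fun i => (a • p + b • q).1 i) ⬝ᵥ x)
        = a * ((fun i => p.1 i) ⬝ᵥ x) + b * ((fun i => q.1 i) ⬝ᵥ x) := by
      simp only [dotProduct, Prod.fst_add, Prod.smul_fst, PiLp.add_apply, PiLp.smul_apply,
        smul_eq_mul, Finset.mul_sum]
      rw [← Finset.sum_add_distrib]
      exact Finset.sum_congr rfl fun i _ => by ring
    have hu : x ⬝ᵥ ((a • p + b • q).2 *ᵥ x)
        = a * (x ⬝ᵥ (p.2 *ᵥ x)) + b * (x ⬝ᵥ (q.2 *ᵥ x)) := by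
      show x ⬝ᵥ ((a • p.2 + b • q.2) *ᵥ x) = _
      rw [add_mulVec, smul_mulVec, smul_mulVec, dotProduct_add, dotProduct_smul,
        dotProduct_smul, smul_eq_mul, smul_eq_mul]
    rw [hv, hu]
    set P := (fun i => p.1 i) ⬝ᵥ x with hP
    set Q := (fun i => q.1 i) ⬝ᵥ x with hQ
    set U := x ⬝ᵥ (p.2 *ᵥ x) with hU
    set V := x ⬝ᵥ (q.2 *ᵥ x) with hV
    set X := r ^ 2 / (n:ℝ) * (x ⬝ᵥ x) with hX
    have hb' : b = 1 - a := by linarith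
    subst hb'
    nlinarith [mul_le_mul_of_nonneg_left h1 ha, mul_le_mul_of_nonneg_left h2 hb,
      mul_nonneg (mul_nonneg ha hb) (sq_nonneg (P - Q))]

theorem norm_sq_sum (w : EuclideanSpace ℝ (Fin n)) : ∑ i, w i * w i = ‖w‖ ^ 2 := by
  have h2 : ‖w‖ = Real.sqrt (∑ i, ‖w i‖ ^ 2) := EuclideanSpace.norm_eq _
  have h4 : (0:ℝ) ≤ ∑ i, ‖w i‖ ^ 2 := Finset.sum_nonneg fun i _ => sq_nonneg _
  rw [h2, Real.sq_sqrt h4]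
  exact Finset.sum_congr rfl fun i _ => by rw [Real.norm_eq_abs, sq_abs, sq]

theorem euler_subset_Sset {r : ℝ} (hn : 0 < n) (hr : 0 ≤ r) : eulerStates n r ⊆ Sset n r := by
  rintro p ⟨w, hw, rfl⟩
  have hn' : ((n:ℝ)) ≠ 0 := Nat.cast_ne_zero.mpr hn.ne'
  have hsum : ∑ i, w i * w i = r ^ 2 := by rw [norm_sq_sum, hw]
  refine ⟨?_, ?_, ?_⟩
  · show (vecMulVec (fun i => w i) (fun i => w i) - (r^2/n) • 1)ᵀ = _
    rw [transpose_sub, transpose_smul, transpose_one, vecMulVec_self_transpose]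
  · show (vecMulVec (fun i => w i) (fun i => w i) - (r^2/n) • 1).trace = 0
    rw [trace_sub, trace_smul, trace_one, trace_vecMulVec']
    simp only [smul_eq_mul, dotProduct]
    rw [hsum]
    field_simp
    simp
  · intro x
    have hA : matA (w, vecMulVec (fun i => w i) (fun i => w i) - (r^2/n) • 1)
        = (r^2/(n:ℝ)) • (1 : Matrix (Fin n) (Fin n) ℝ) := by
      exact sub_sub_cancel _ _
    rw [hA, smul_mulVec, one_mulVec, dotProduct_smul, smul_eq_mul]

end SsetSection

/- ### Topological properties of S -/

section Topo

variable {n : ℕ}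

theorem Sset_isClosed (n : ℕ) (r : ℝ) : IsClosed (Sset n r) := by
  have h1 : IsClosed {p : EV n | p.2.IsSymm} := by
    have he : {p : EV n | p.2.IsSymm}
        = ⋂ i, ⋂ j, {p : EV n | p.2 j i = p.2 i j} := by
      ext p
      simp only [Set.mem_iInter, Set.mem_setOf_eq]
      constructor
      · intro h i j
        exact congrFun (congrFun h i) j
      · intro h
        ext i j
        rw [transpose_apply]
        exact h i j
    rw [he]
    exact isClosed_iInter fun i => isClosed_iInter fun j =>
      isClosed_eq (continuous_snd.matrix_elem j i) (continuous_snd.matrix_elem i j)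
  have h2 : IsClosed {p : EV n | p.2.trace = 0} := by
    have : IsClosed {p : EV n | ∑ i, p.2 i i = 0} :=
      isClosed_eq (continuous_finset_sum _ fun i _ => continuous_snd.matrix_elem i i)
        continuous_const
    exact this
  have h3 : IsClosed {p : EV n |
      ∀ x : Fin n → ℝ, x ⬝ᵥ (matA p *ᵥ x) ≤ r ^ 2 / n * (x ⬝ᵥ x)} := by
    have he : {p : EV n | ∀ x : Fin n → ℝ, x ⬝ᵥ (matA p *ᵥ x) ≤ r ^ 2 / n * (x ⬝ᵥ x)}
        = ⋂ x : Fin n → ℝ, {p : EV n | x ⬝ᵥ (matA p *ᵥ x) ≤ r ^ 2 / n * (x ⬝ᵥ x)} := by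
      ext p
      simp only [Set.mem_iInter, Set.mem_setOf_eq]
    rw [he]
    refine isClosed_iInter fun x => isClosed_le ?_ continuous_const
    show Continuous fun p : EV n => ∑ i, x i * ∑ j, (p.1 i * p.1 j - p.2 i j) * x j
    refine continuous_finset_sum _ fun i _ => Continuous.mul continuous_const ?_
    refine continuous_finset_sum _ fun j _ => Continuous.mul ?_ continuous_const
    exact (((PiLp.continuous_apply 2 _ i).comp continuous_fst).mul
      ((PiLp.continuous_apply 2 _ j).comp continuous_fst)).sub (continuous_snd.matrix_elem i j)
  have : Sset n r = {p : EV n | p.2.IsSymm} ∩ ({p : EV n | p.2.trace = 0} ∩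
      {p : EV n | ∀ x : Fin n → ℝ, x ⬝ᵥ (matA p *ᵥ x) ≤ r ^ 2 / n * (x ⬝ᵥ x)}) := rfl
  rw [this]
  exact h1.inter (h2.inter h3)

end Topo

section Compactness

variable {n : ℕ}

theorem Sset_isCompact (hn : 0 < n) {r : ℝ} (hr : 0 < r) : IsCompact (Sset n r) := by
  classical
  have hn' : ((n:ℝ)) ≠ 0 := Nat.cast_ne_zero.mpr hn.ne'
  have hn1 : (1:ℝ) ≤ (n:ℝ) := by exact_mod_cast hn
  set C : ℝ := 3 * r ^ 2 with hC
  have hbox : IsCompact {A : Matrix (Fin n) (Fin n) ℝ | ∀ i j, A i j ∈ Set.Icc (-C) C} := by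
    have h0 : IsCompact {f : Fin n → ℝ | ∀ j, f j ∈ Set.Icc (-C) C} := by
      have he : {f : Fin n → ℝ | ∀ j, f j ∈ Set.Icc (-C) C}
          = Set.univ.pi fun _ : Fin n => Set.Icc (-C) C := by
        ext f; simp [Set.mem_univ_pi, Pi.le_def, forall_and]
      rw [he]
      exact isCompact_univ_pi fun _ => isCompact_Icc
    have he : {A : Matrix (Fin n) (Fin n) ℝ | ∀ i j, A i j ∈ Set.Icc (-C) C}
        = Set.univ.pi fun _ : Fin n => {f : Fin n → ℝ | ∀ j, f j ∈ Set.Icc (-C) C} := by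
      ext A
      exact ⟨fun h i _ j => h i j, fun h i j => h i (Set.mem_univ i) j⟩
    rw [he]
    exact isCompact_univ_pi fun _ => h0
  refine IsCompact.of_isClosed_subset
    ((isCompact_closedBall (0 : EuclideanSpace ℝ (Fin n)) r).prod hbox)
    (Sset_isClosed n r) ?_
  rintro ⟨v, u⟩ ⟨hsymm, htr, hquad⟩
  have hu' : ∀ i j, u j i = u i j := fun i j => congrFun (congrFun hsymm i) j
  set M : Matrix (Fin n) (Fin n) ℝ := (r^2/(n:ℝ)) • 1 - matA (v, u) with hM
  have hMpsd : ∀ x : Fin n → ℝ, 0 ≤ x ⬝ᵥ (M *ᵥ x) := by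
    intro x
    rw [hM, quad_smul_one]
    have := hquad x
    linarith
  have hMentry : ∀ i j, M i j
      = r^2/(n:ℝ) * (if i = j then 1 else 0) - v i * v j + u i j := by
    intro i j
    simp only [hM, matA, Matrix.sub_apply, Matrix.smul_apply, Matrix.one_apply,
      vecMulVec_apply, smul_eq_mul]
    ring_nf
  have hMsym : ∀ i j, M j i = M i j := by
    intro i j
    rw [hMentry, hMentry, hu' i j]
    by_cases h : i = j
    · subst h; simp
    · rw [if_neg h, if_neg (fun hh => h hh.symm)]
      ring
  have hdiag : ∀ i, 0 ≤ M i i := by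
    intro i
    have := hMpsd (Pi.single i 1)
    rwa [dot_mulVec_single] at this
  have hsumM : ∑ i, M i i = r ^ 2 - ∑ i, v i * v i := by
    have htru : ∑ i, u i i = 0 := htr
    have : ∀ i, M i i = r^2/(n:ℝ) - v i * v i + u i i := by
      intro i
      rw [hMentry, if_pos rfl, mul_one]
    rw [Finset.sum_congr rfl fun i _ => this i]
    rw [Finset.sum_add_distrib, Finset.sum_sub_distrib, htru, Finset.sum_const,
      Finset.card_univ, Fintype.card_fin, nsmul_eq_mul, add_zero, mul_div_cancel₀ _ hn']
  have hsumv : ∑ i, v i * v i ≤ r ^ 2 := by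
    have h0 : (0:ℝ) ≤ ∑ i, M i i := Finset.sum_nonneg fun i _ => hdiag i
    linarith [hsumM]
  have hsumv0 : (0:ℝ) ≤ ∑ i, v i * v i :=
    Finset.sum_nonneg fun i _ => mul_self_nonneg _
  have hMii_le : ∀ i, M i i ≤ r ^ 2 := by
    intro i
    have h1 : M i i ≤ ∑ j, M j j :=
      Finset.single_le_sum (fun j _ => hdiag j) (Finset.mem_univ i)
    linarith [hsumM]
  have hMoff : ∀ i j, |M i j| ≤ r ^ 2 := by
    intro i j
    by_cases h : i = j
    · subst h
      rw [abs_le]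
      exact ⟨by linarith [hdiag i], hMii_le i⟩
    · have ep := hMpsd (Pi.single i 1 + Pi.single j 1)
      have em := hMpsd (Pi.single i 1 - Pi.single j 1)
      rw [mulVec_add, dotProduct_add, add_dotProduct, add_dotProduct, dot_mulVec_single,
        dot_mulVec_single, dot_mulVec_single, dot_mulVec_single] at ep
      rw [mulVec_sub, dotProduct_sub, sub_dotProduct, sub_dotProduct, dot_mulVec_single,
        dot_mulVec_single, dot_mulVec_single, dot_mulVec_single] at em
      rw [abs_le]
      have hms := hMsym i j
      exact ⟨by nlinarith [hMii_le i, hMii_le j], by nlinarith [hMii_le i, hMii_le j]⟩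
  have hvabs : ∀ i, |v i| ≤ r := by
    intro i
    have h1 : v i * v i ≤ r ^ 2 := by
      have := Finset.single_le_sum (fun j (_ : j ∈ Finset.univ) => mul_self_nonneg (v j))
        (Finset.mem_univ i)
      linarith [hsumv]
    have : |v i| = Real.sqrt (v i ^ 2) := (Real.sqrt_sq_eq_abs _).symm
    rw [this, show v i ^ 2 = v i * v i from sq (v i) ▸ by ring]
    calc Real.sqrt (v i * v i) ≤ Real.sqrt (r ^ 2) := Real.sqrt_le_sqrt h1
    _ = r := Real.sqrt_sq hr.le
  refine ⟨?_, ?_⟩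
  · show v ∈ Metric.closedBall 0 r
    rw [Metric.mem_closedBall, dist_zero_right]
    have h2 : ‖v‖ = Real.sqrt (∑ i, ‖v i‖ ^ 2) := EuclideanSpace.norm_eq _
    have h3 : ∑ i, ‖v i‖ ^ 2 = ∑ i, v i * v i :=
      Finset.sum_congr rfl fun i _ => by rw [Real.norm_eq_abs, sq_abs, sq]
    rw [h2, h3]
    calc Real.sqrt (∑ i, v i * v i) ≤ Real.sqrt (r ^ 2) := Real.sqrt_le_sqrt hsumv
    _ = r := Real.sqrt_sq hr.le
  · show ∀ i j, u i j ∈ Set.Icc (-C) C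
    intro i j
    have h1 : u i j = M i j - r^2/(n:ℝ) * (if i = j then 1 else 0) + v i * v j := by
      rw [hMentry]; ring
    have h2 : |v i * v j| ≤ r ^ 2 := by
      rw [abs_mul]
      calc |v i| * |v j| ≤ r * r := mul_le_mul (hvabs i) (hvabs j) (abs_nonneg _) hr.le
      _ = r ^ 2 := (sq r).symm
    have h3 : (0:ℝ) ≤ r^2/(n:ℝ) * (if i = j then 1 else 0) := by
      split <;> positivity
    have h4 : r^2/(n:ℝ) * (if i = j then 1 else 0) ≤ r ^ 2 := by
      split
      · rw [mul_one]
        calc r^2/(n:ℝ) ≤ r^2/1 := by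
              apply div_le_div_of_nonneg_left (sq_nonneg r) one_pos hn1
        _ = r ^ 2 := div_one _
      · rw [mul_zero]; positivity
    have h5 := abs_le.mp (hMoff i j)
    have h6 := abs_le.mp h2
    rw [Set.mem_Icc, hC]
    exact ⟨by linarith [h1, h5.1, h6.1], by linarith [h1, h5.2, h6.2]⟩

end Compactness

/- ### Extreme points of S lie in K -/

section Extreme

variable {n : ℕ}

theorem extremePoints_Sset_subset [NeZero n] {r : ℝ} (hr : 0 < r) :
    Set.extremePoints ℝ (Sset n r) ⊆ eulerStates n r := by
  have hn : 0 < n := Nat.pos_of_ne_zero (NeZero.ne n)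
  have hn' : ((n:ℝ)) ≠ 0 := Nat.cast_ne_zero.mpr hn.ne'
  rintro ⟨v, u⟩ hp
  rw [mem_extremePoints] at hp
  obtain ⟨⟨hsymm, htr, hquad⟩, hext⟩ := hp
  set A : Matrix (Fin n) (Fin n) ℝ := vecMulVec (fun i => v i) (fun i => v i) - u with hA
  set M : Matrix (Fin n) (Fin n) ℝ := (r^2/(n:ℝ)) • 1 - A with hM
  have hAsym : Aᵀ = A := by
    rw [hA, transpose_sub, vecMulVec_self_transpose, hsymm]
  have hMsymm : Mᵀ = M := by
    rw [hM, transpose_sub, transpose_smul, transpose_one, hAsym]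
  have hMval : ∀ x : Fin n → ℝ, x ⬝ᵥ (M *ᵥ x) = r^2/(n:ℝ) * (x ⬝ᵥ x) - x ⬝ᵥ (A *ᵥ x) :=
    fun x => quad_smul_one _ _ x
  have hMpsd : ∀ x : Fin n → ℝ, 0 ≤ x ⬝ᵥ (M *ᵥ x) := by
    intro x
    rw [hMval]
    have h := hquad x
    have hAm : matA (v, u) = A := rfl
    rw [hAm] at h
    linarith
  by_cases hM0 : M = 0
  · -- M = 0 : the point is an Euler state
    have hAeq : A = (r^2/(n:ℝ)) • 1 := by
      have := sub_eq_zero.mp hM0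
      exact this.symm
    have hu : u = vecMulVec (fun i => v i) (fun i => v i) - (r^2/(n:ℝ)) • 1 := by
      have h1 : vecMulVec (fun i => v i) (fun i => v i) - u = (r^2/(n:ℝ)) • 1 := hA ▸ hAeq
      rw [← h1]
      exact (sub_sub_cancel _ _).symm
    have hsum : ∑ i, v i * v i = r ^ 2 := by
      have h1 : u.trace = 0 := htr
      rw [hu, trace_sub, trace_smul, trace_one, trace_vecMulVec'] at h1
      simp only [smul_eq_mul, dotProduct, Finset.card_univ, Fintype.card_fin] at h1
      have h2 : r^2/(n:ℝ) * (n:ℝ) = r^2 := div_mul_cancel₀ _ hn'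
      linarith
    have hnorm : ‖v‖ = r := by
      have := norm_sq_sum v
      have h2 : ‖v‖ ^ 2 = r ^ 2 := by rw [← this, hsum]
      have h3 : (0:ℝ) ≤ ‖v‖ := norm_nonneg _
      nlinarith
    exact ⟨v, hnorm, by rw [Prod.ext_iff]; exact ⟨rfl, hu⟩⟩
  · -- M ≠ 0 : contradiction with extremality
    exfalso
    have hMher : M.IsHermitian := isHermitian_of_symm hMsymm
    obtain ⟨z, hz1, hzM⟩ := exists_rayleigh_eq hMher
    set μ := lambdaMax M with hμ
    have hμpos : 0 < μ := by
      rcases lt_or_ge 0 μ with h | h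
      · exact h
      · exfalso
        apply hM0
        obtain ⟨i₀, hmax, hle⟩ := lambdaMax_spec hMher
        have hnonneg : ∀ j, 0 ≤ hMher.eigenvalues j := by
          intro j
          have hev := hMher.eigenvalues_eq j
          have hps := hMpsd ⇑(hMher.eigenvectorBasis j)
          simp only [RCLike.re_to_real] at hev
          rw [hev]
          simpa using hps
        have hzero : ∀ j, hMher.eigenvalues j = 0 := fun j =>
          le_antisymm (le_trans (hle j) (by rw [← hmax, hμ] at *; linarith)) (hnonneg j)
        have : M = (hMher.eigenvectorUnitary : Matrix (Fin n) (Fin n) ℝ)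
            * diagonal (RCLike.ofReal ∘ hMher.eigenvalues)
            * star (hMher.eigenvectorUnitary : Matrix (Fin n) (Fin n) ℝ) :=
          hMher.spectral_theorem
        rw [this]
        have hdiag0 : diagonal (RCLike.ofReal ∘ hMher.eigenvalues)
            = (0 : Matrix (Fin n) (Fin n) ℝ) := by
          have : (RCLike.ofReal ∘ hMher.eigenvalues : Fin n → ℝ) = fun _ => 0 := by
            funext j
            simp [hzero j]
          rw [this]
          exact diagonal_zero
        rw [hdiag0, mul_zero, zero_mul]
    have hkey : ∀ s : ℝ, s ≤ μ → ∀ x : Fin n → ℝ, s * (z ⬝ᵥ x)^2 ≤ x ⬝ᵥ (M *ᵥ x) := by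
      intro s hs x
      set a := z ⬝ᵥ x with ha
      set y := x - a • z with hy
      have hzy : z ⬝ᵥ y = 0 := by
        rw [hy, dotProduct_sub, dotProduct_smul, smul_eq_mul, hz1, mul_one, sub_self]
      have hyz : y ⬝ᵥ z = 0 := by rw [dotProduct_comm]; exact hzy
      have hyM : 0 ≤ y ⬝ᵥ (M *ᵥ y) := hMpsd y
      have hx : x = y + a • z := by rw [hy]; abel
      have e1 : x ⬝ᵥ (M *ᵥ x) = y ⬝ᵥ (M *ᵥ y) + μ * a^2 := by
        conv_lhs => rw [hx]
        rw [mulVec_add, mulVec_smul, hzM, dotProduct_add, add_dotProduct, add_dotProduct]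
        have t1 : y ⬝ᵥ (a • μ • z) = 0 := by
          rw [dotProduct_smul, dotProduct_smul, hyz]
          simp
        have t2 : (a • z) ⬝ᵥ (M *ᵥ y) = 0 := by
          rw [smul_dotProduct, dotProduct_mulVec_symm hMsymm, hzM, dotProduct_smul, hyz]
          simp
        have t3 : (a • z) ⬝ᵥ (a • μ • z) = μ * a ^ 2 := by
          simp only [smul_dotProduct, dotProduct_smul, smul_eq_mul, hz1]
          ring
        rw [t1, t2, t3]
        ring
      rw [e1]
      nlinarith [mul_le_mul_of_nonneg_right hs (sq_nonneg a)]
    set c := (fun i => v i) ⬝ᵥ z with hc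
    set ε := μ / (1 + 2*|c| + μ) with hε
    have hD : (0:ℝ) < 1 + 2*|c| + μ := by
      have := abs_nonneg c
      linarith
    have hεpos : 0 < ε := div_pos hμpos hD
    have hε1 : ε ≤ 1 := by
      rw [hε, div_le_one hD]
      have := abs_nonneg c
      linarith
    have hεle : ε * (1 + 2*|c|) ≤ μ := by
      rw [hε, div_mul_eq_mul_div, div_le_iff₀ hD]
      nlinarith [abs_nonneg c, hμpos]
    have hsplus : ε^2 + 2*ε*c ≤ μ := by
      nlinarith [le_abs_self c, hεpos, hε1, hεle]
    have hsminus : ε^2 - 2*ε*c ≤ μ := by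
      nlinarith [neg_abs_le c, hεpos, hε1, hεle]
    set zE : EuclideanSpace ℝ (Fin n) := (WithLp.equiv 2 (Fin n → ℝ)).symm z with hzE
    have hzEapp : ∀ i, zE i = z i := fun i => rfl
    set σ : Matrix (Fin n) (Fin n) ℝ :=
      vecMulVec (fun i => v i) z + vecMulVec z (fun i => v i) - (2*c) • vecMulVec z z with hσ
    have hσsymm : σᵀ = σ := by
      rw [hσ]
      ext i j
      simp only [transpose_apply, Matrix.sub_apply, Matrix.add_apply, Matrix.smul_apply,
        vecMulVec_apply, smul_eq_mul]
      ring
    have hσtr : σ.trace = 0 := by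
      rw [hσ, trace_sub, trace_add, trace_smul, trace_vecMulVec', trace_vecMulVec',
        trace_vecMulVec']
      have h1 : z ⬝ᵥ (fun i => v i) = c := by rw [dotProduct_comm]
      have h2 : z ⬝ᵥ z = 1 := hz1
      rw [h1, h2]
      simp only [smul_eq_mul]
      have : ((fun i => v i) ⬝ᵥ z) = c := rfl
      rw [this]
      ring
    have hmem : ∀ t : ℝ, t^2 + 2*t*c ≤ μ → (v + t • zE, u + t • σ) ∈ Sset n r := by
      intro t ht
      refine ⟨?_, ?_, ?_⟩
      · show (u + t • σ)ᵀ = u + t • σ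
        rw [transpose_add, transpose_smul, hσsymm, hsymm]
      · show (u + t • σ).trace = 0
        rw [trace_add, trace_smul, hσtr, htr]
        simp
      · intro x
        have hA' : matA (v + t • zE, u + t • σ) = A + (t^2 + 2*t*c) • vecMulVec z z := by
          ext i j
          simp only [matA, hA, hσ, Matrix.sub_apply, Matrix.add_apply, Matrix.smul_apply,
            vecMulVec_apply, smul_eq_mul, PiLp.add_apply, PiLp.smul_apply]
          rw [hzEapp i, hzEapp j]
          ring
        rw [hA', add_mulVec, dotProduct_add, smul_mulVec, dotProduct_smul, smul_eq_mul,
          dot_vecMulVec]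
        have h1 := hkey _ ht x
        have h2 : x ⬝ᵥ (A *ᵥ x) ≤ r^2/(n:ℝ) * (x ⬝ᵥ x) := hquad x
        have h3 := hMval x
        linarith
    have hp1 := hmem (-ε) (by
      have : (-ε)^2 + 2*(-ε)*c = ε^2 - 2*ε*c := by ring
      rw [this]
      exact hsminus)
    have hp2 := hmem ε hsplus
    have hseg : ((v, u) : EV n) ∈ openSegment ℝ (v + (-ε) • zE, u + (-ε) • σ)
        (v + ε • zE, u + ε • σ) := by
      refine ⟨1/2, 1/2, by norm_num, by norm_num, by norm_num, ?_⟩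
      rw [Prod.ext_iff]
      constructor
      · show (1/2 : ℝ) • (v + (-ε) • zE) + (1/2 : ℝ) • (v + ε • zE) = v
        module
      · show (1/2 : ℝ) • (u + (-ε) • σ) + (1/2 : ℝ) • (u + ε • σ) = u
        module
    obtain ⟨_, h2⟩ := hext _ hp1 _ hp2 hseg
    have h3 : v + ε • zE = v := congrArg Prod.fst h2
    have h4 : ε • zE = 0 := by
      have := h3
      rwa [add_eq_left] at this
    have h5 : zE = 0 := by
      rcases smul_eq_zero.mp h4 with h | h
      · exact absurd h hεpos.ne'
      · exact h
    have h6 : z ⬝ᵥ z = 0 := by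
      have : ∀ i, z i = 0 := by
        intro i
        rw [← hzEapp i, h5]
        rfl
      simp [dotProduct, this]
    rw [hz1] at h6
    exact one_ne_zero h6

end Extreme

/- ### Compactness of the Euler states -/

section EulerCompact

variable {n : ℕ}

theorem euler_isCompact (n : ℕ) (r : ℝ) : IsCompact (eulerStates n r) := by
  have himg : eulerStates n r
      = (fun w : EuclideanSpace ℝ (Fin n) =>
          ((w, vecMulVec (fun i => w i) (fun i => w i)
            - (r ^ 2 / n) • (1 : Matrix (Fin n) (Fin n) ℝ)) : EV n)) '' (Metric.sphere 0 r) := by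
    ext p
    constructor
    · rintro ⟨w, hw, rfl⟩
      exact ⟨w, by rwa [mem_sphere_zero_iff_norm], rfl⟩
    · rintro ⟨w, hw, rfl⟩
      exact ⟨w, by rwa [mem_sphere_zero_iff_norm] at hw, rfl⟩
  rw [himg]
  apply (isCompact_sphere (0 : EuclideanSpace ℝ (Fin n)) r).image
  refine Continuous.prodMk continuous_id ?_
  refine Continuous.sub ?_ continuous_const
  exact continuous_matrix fun i j => (PiLp.continuous_apply 2 _ i).mul (PiLp.continuous_apply 2 _ j)

end EulerCompact

instance matrixLocallyConvex {n : ℕ} : LocallyConvexSpace ℝ (Matrix (Fin n) (Fin n) ℝ) :=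
  Pi.locallyConvexSpace

/-- `√(2 e(v,u))` is the smallest `ρ > 0` with
`(v,u) ∈ (K_ρ)^co`. -/
theorem sqrt_two_eFun_isLeast (n : ℕ) (hn : 2 ≤ n)
    (v : EuclideanSpace ℝ (Fin n)) (u : Matrix (Fin n) (Fin n) ℝ)
    (hsymm : u.IsSymm) (htr : u.trace = 0) (hpos : 0 < eFun v u) :
    IsLeast {ρ : ℝ | 0 < ρ ∧ (v, u) ∈ convexHull ℝ (eulerStates n ρ)}
      (Real.sqrt (2 * eFun v u)) := by
  haveI : NeZero n := ⟨by omega⟩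
  have hn0 : 0 < n := by omega
  have hn' : ((n:ℝ)) ≠ 0 := Nat.cast_ne_zero.mpr hn0.ne'
  have hnpos : (0:ℝ) < n := Nat.cast_pos.mpr hn0
  have hAher : (vecMulVec (fun i => v i) (fun i => v i) - u).IsHermitian := by
    apply isHermitian_of_symm
    rw [transpose_sub, vecMulVec_self_transpose, hsymm]
  set lam := lambdaMax (vecMulVec (fun i => v i) (fun i => v i) - u) with hlamdef
  have heFun : eFun v u = (n / 2 : ℝ) * lam := rfl
  have hlam : 0 < lam := by
    by_contra hcon
    push_neg at hcon
    have : eFun v u ≤ 0 := by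
      rw [heFun]
      apply mul_nonpos_of_nonneg_of_nonpos _ hcon
      positivity
    linarith
  set ρ := Real.sqrt (2 * eFun v u) with hρdef
  have h2e : 0 < 2 * eFun v u := by linarith
  have hρpos : 0 < ρ := Real.sqrt_pos.mpr h2e
  have hρsq : ρ ^ 2 = 2 * eFun v u := Real.sq_sqrt h2e.le
  have hρn : ρ ^ 2 / (n:ℝ) = lam := by
    rw [hρsq, heFun]
    field_simp
  constructor
  · -- membership
    refine ⟨hρpos, ?_⟩
    have hmemS : ((v, u) : EV n) ∈ Sset n ρ := by
      refine ⟨hsymm, htr, ?_⟩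
      intro x
      have h := rayleigh_le hAher x
      have hAm : matA ((v, u) : EV n) = vecMulVec (fun i => v i) (fun i => v i) - u := rfl
      rw [hAm, hρn]
      exact h
    have hKM := closure_convexHull_extremePoints (Sset_isCompact hn0 hρpos) (Sset_convex n ρ)
    have hsub : Sset n ρ ⊆ convexHull ℝ (eulerStates n ρ) := by
      calc Sset n ρ = closure (convexHull ℝ (Set.extremePoints ℝ (Sset n ρ))) := hKM.symm
      _ ⊆ closure (convexHull ℝ (eulerStates n ρ)) :=
          closure_mono (convexHull_mono (extremePoints_Sset_subset hρpos))
      _ = convexHull ℝ (eulerStates n ρ) :=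
          (myIsCompact_convexHull (euler_isCompact n ρ)).isClosed.closure_eq
    exact hsub hmemS
  · -- lower bound
    rintro ρ' ⟨hρ'pos, hmem⟩
    have hsub : convexHull ℝ (eulerStates n ρ') ⊆ Sset n ρ' :=
      convexHull_min (euler_subset_Sset hn0 hρ'pos.le) (Sset_convex n ρ')
    obtain ⟨_, _, hquad⟩ := hsub hmem
    obtain ⟨z, hz1, hzA⟩ := exists_rayleigh_eq hAher
    have h1 := hquad z
    have hAm : matA ((v, u) : EV n) = vecMulVec (fun i => v i) (fun i => v i) - u := rfl
    rw [hAm, hzA, dotProduct_smul, smul_eq_mul, hz1, mul_one, mul_one] at h1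
    -- h1 : lam ≤ ρ'^2 / n
    have h2 : 2 * eFun v u ≤ ρ' ^ 2 := by
      rw [heFun]
      have h3 : (n:ℝ) * lam ≤ (n:ℝ) * (ρ'^2 / (n:ℝ)) :=
        mul_le_mul_of_nonneg_left h1 hnpos.le
      rw [mul_div_cancel₀ _ hn'] at h3
      linarith
    calc ρ = Real.sqrt (2 * eFun v u) := rfl
    _ ≤ Real.sqrt (ρ' ^ 2) := Real.sqrt_le_sqrt h2
    _ = ρ' := Real.sqrt_sq hρ'pos.le
end

section
/- With notation as above, and η := (−1/(|a||b| + a·b)^{2/3})·(a + b − (|a||b| + a·b)e_{n+1}), one has A(η) = U_a − U_b, where U_v is the (n+1)×(n+1) matrix with upper-left n×n block v⊗v, last column and last row equal to v (in the first n entries), and (n+1,n+1) entry 0; explicitly A(η) has upper-left block a⊗a − b⊗b, last column/row a − b, and (n+1,n+1) entry 0. -/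
open Matrix

lemma vmv_mulVec {m : ℕ} (u v x : Fin m → ℝ) :
    (vecMulVec u v).mulVec x = (v ⬝ᵥ x) • u := by
  ext i
  simp [vecMulVec, mulVec, dotProduct, ← Finset.mul_sum, mul_comm, mul_assoc, mul_left_comm]

lemma dot_inner {m : ℕ} (x y : EuclideanSpace ℝ (Fin m)) :
    (fun i => x i) ⬝ᵥ (fun i => y i) = (inner ℝ x y : ℝ) := by
  simp [dotProduct, PiLp.inner_apply, RCLike.inner_apply, mul_comm]

/-- evaluating the symbol at the special direction `η` yields
`U_a − U_b`, the difference of the two Euler-state matrices. -/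
theorem symbol_at_eta (n : ℕ) (hn : 2 ≤ n)
    (a b : EuclideanSpace ℝ (Fin (n + 1)))
    (ha : a (Fin.last n) = 0) (hb : b (Fin.last n) = 0)
    (hab : ‖a‖ = ‖b‖) (hne : a ≠ b) (hne' : a ≠ -b) :
    let e : Fin (n + 1) → ℝ := Pi.single (Fin.last n) 1
    let R : Matrix (Fin (n + 1)) (Fin (n + 1)) ℝ :=
      vecMulVec (fun i => a i) (fun i => b i) - vecMulVec (fun i => b i) (fun i => a i)
    let Q : (Fin (n + 1) → ℝ) → Matrix (Fin (n + 1)) (Fin (n + 1)) ℝ :=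
      fun ξ => vecMulVec ξ e - vecMulVec e ξ
    let A : (Fin (n + 1) → ℝ) → Matrix (Fin (n + 1)) (Fin (n + 1)) ℝ :=
      fun ξ => (1 / 2 : ℝ) •
        (vecMulVec (R.mulVec ξ) ((Q ξ).mulVec ξ)
          + vecMulVec ((Q ξ).mulVec ξ) (R.mulVec ξ))
    -- the matrix `U_v` with upper-left block `v⊗v`, last row/column `v`,
    -- and vanishing `(n+1,n+1)` entry (for `v` with last coordinate zero)
    let U : (Fin (n + 1) → ℝ) → Matrix (Fin (n + 1)) (Fin (n + 1)) ℝ :=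
      fun v => vecMulVec v v + vecMulVec v e + vecMulVec e v
    let η : Fin (n + 1) → ℝ :=
      (-1 / (‖a‖ * ‖b‖ + (inner ℝ a b : ℝ)) ^ ((2 : ℝ) / 3)) •
        ((fun i => a i) + (fun i => b i) - (‖a‖ * ‖b‖ + (inner ℝ a b : ℝ)) • e)
    A η = U (fun i => a i) - U (fun i => b i) := by
  intro e R Q A U η
  set c : ℝ := ‖a‖ * ‖b‖ + (inner ℝ a b : ℝ) with hc_def
  set s : ℝ := -1 / c ^ ((2 : ℝ) / 3) with hs_def
  -- a ≠ 0
  have ha0 : a ≠ 0 := by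
    intro h
    apply hne'
    have hb0 : ‖b‖ = 0 := by rw [← hab, h, norm_zero]
    rw [h, norm_eq_zero.mp hb0, neg_zero]
  have hna : ‖a‖ ≠ 0 := norm_ne_zero_iff.mpr ha0
  -- positivity of c
  have hc0 : (0 : ℝ) < c := by
    have hlt : (inner ℝ a (-b) : ℝ) < ‖a‖ * ‖-b‖ := by
      rw [inner_lt_norm_mul_iff_real]
      intro h
      apply hne'
      rw [norm_neg, ← hab] at h
      have : a = -b := by
        have := congrArg (fun v => (‖a‖)⁻¹ • v) h
        simpa [smul_smul, inv_mul_cancel₀ hna] using this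
      exact this
    rw [inner_neg_right, norm_neg] at hlt
    rw [hc_def]
    linarith
  have hcne : c ≠ 0 := ne_of_gt hc0
  -- key scalar identity
  have hs3 : s ^ 3 * c ^ 2 = -1 := by
    have h1 : (c ^ ((2 : ℝ) / 3)) ^ (3 : ℕ) = c ^ 2 := by
      rw [← Real.rpow_natCast (c ^ ((2 : ℝ) / 3)) 3, ← Real.rpow_mul hc0.le]
      norm_num
    have hp : c ^ ((2 : ℝ) / 3) ≠ 0 := by
      positivity
    rw [hs_def, div_pow, ← h1]
    field_simp
  -- dot products
  have dea : e ⬝ᵥ (fun i => a i) = 0 := by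
    simp [e, dotProduct, Pi.single_apply, ha]
  have dae : (fun i => a i) ⬝ᵥ e = 0 := by
    simp [e, dotProduct, Pi.single_apply, ha]
  have deb : e ⬝ᵥ (fun i => b i) = 0 := by
    simp [e, dotProduct, Pi.single_apply, hb]
  have dbe : (fun i => b i) ⬝ᵥ e = 0 := by
    simp [e, dotProduct, Pi.single_apply, hb]
  have dee : e ⬝ᵥ e = 1 := by
    simp [e, dotProduct, Pi.single_apply]
  have daa : (fun i => a i) ⬝ᵥ (fun i => a i) = ‖a‖ * ‖b‖ := by
    rw [dot_inner, real_inner_self_eq_norm_mul_norm, hab]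
  have dbb : (fun i => b i) ⬝ᵥ (fun i => b i) = ‖a‖ * ‖b‖ := by
    rw [dot_inner, real_inner_self_eq_norm_mul_norm, hab]
  have dab : (fun i => a i) ⬝ᵥ (fun i => b i) = (inner ℝ a b : ℝ) := dot_inner a b
  have dba : (fun i => b i) ⬝ᵥ (fun i => a i) = (inner ℝ a b : ℝ) := by
    rw [dot_inner, real_inner_comm]
  -- dot products with η
  have daη : (fun i => a i) ⬝ᵥ η = s * c := by
    simp only [η, dotProduct_smul, dotProduct_add, dotProduct_sub, smul_eq_mul,
      daa, dab, dae, ← hs_def, ← hc_def]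
    ring
  have dbη : (fun i => b i) ⬝ᵥ η = s * c := by
    simp only [η, dotProduct_smul, dotProduct_add, dotProduct_sub, smul_eq_mul,
      dbb, dba, dbe, ← hs_def, ← hc_def]
    ring
  have deη : e ⬝ᵥ η = s * (-c) := by
    simp only [η, dotProduct_smul, dotProduct_add, dotProduct_sub, smul_eq_mul,
      dea, deb, dee, ← hs_def, ← hc_def]
    ring
  have dηη : η ⬝ᵥ η = s ^ 2 * (2 * c + c ^ 2) := by
    simp only [η, dotProduct_smul, smul_dotProduct, dotProduct_add, dotProduct_sub,
      add_dotProduct, sub_dotProduct, smul_eq_mul,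
      daa, dbb, dab, dba, dae, dbe, dea, deb, dee, ← hs_def, ← hc_def]
    ring
  -- R η
  have hR : ∀ i, R.mulVec η i = s * c * (a i - b i) := by
    intro i
    have : R.mulVec η = ((fun i => b i) ⬝ᵥ η) • (fun i => a i)
        - ((fun i => a i) ⬝ᵥ η) • (fun i => b i) := by
      rw [show R.mulVec η = (vecMulVec (fun i => a i) (fun i => b i)).mulVec η
          - (vecMulVec (fun i => b i) (fun i => a i)).mulVec η from Matrix.sub_mulVec _ _ _,
        vmv_mulVec, vmv_mulVec]
    rw [this]
    simp only [Pi.sub_apply, Pi.smul_apply, smul_eq_mul, daη, dbη]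
    ring
  -- (Q η) η
  have hQ : ∀ i, (Q η).mulVec η i = -(s ^ 2) * c * (a i + b i + 2 * e i) := by
    intro i
    have h1 : (Q η).mulVec η = (e ⬝ᵥ η) • η - (η ⬝ᵥ η) • e := by
      rw [show (Q η).mulVec η = (vecMulVec η e).mulVec η - (vecMulVec e η).mulVec η from
        Matrix.sub_mulVec _ _ _, vmv_mulVec, vmv_mulVec]
    rw [h1, deη, dηη]
    simp only [Pi.sub_apply, Pi.smul_apply, smul_eq_mul, deη, dηη, η,
      Pi.add_apply, ← hs_def, ← hc_def]
    ring
  -- finish entrywise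
  ext i j
  simp only [A, U, Matrix.smul_apply, Matrix.add_apply, Matrix.sub_apply,
    vecMulVec_apply, smul_eq_mul, hR, hQ]
  have hM : (1 / 2 : ℝ) * ((s * c * (a i - b i)) * (-(s ^ 2) * c * (a j + b j + 2 * e j))
      + (-(s ^ 2) * c * (a i + b i + 2 * e i)) * (s * c * (a j - b j)))
      = (-(s ^ 3 * c ^ 2)) * ((1 / 2 : ℝ) * ((a i - b i) * (a j + b j + 2 * e j)
        + (a i + b i + 2 * e i) * (a j - b j))) := by ring
  rw [hM, hs3]
  ring
end
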